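/- Let Λ₁, …, Λ_s be full-rank sublattices of a full-rank lattice Λ ⊂ ℝⁿ with Λ̄ = ⋂_{i=1}^s Λ_i. If det Λ̄ / det Λ ≥ Σ_{i=1}^s (det Λ̄ / det Λ_i) − s + 2, then Λ ≠ ⋃_{i=1}^s Λ_i. -/

import Mathlib

open MeasureTheory Set Pointwise

/-- The lattice generated by the vectors `b`. -/
noncomputable def lat {n : ℕ} (b : Fin n → (Fin n → ℝ)) : Set (Fin n → ℝ) :=
  (Submodule.span ℤ (Set.range b) : Submodule ℤ (Fin n → ℝ))

/-- The determinant (covolume) of the lattice with basis `b`. -/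
noncomputable def latDet {n : ℕ} (b : Fin n → (Fin n → ℝ)) : ℝ :=
  |(Matrix.of b).det|

/-- A compact convex `o`-symmetric body with nonempty interior. -/
def IsBody {n : ℕ} (K : Set (Fin n → ℝ)) : Prop :=
  IsCompact K ∧ Convex ℝ K ∧ K = -K ∧ (interior K).Nonempty

/-- First successive minimum of `K` w.r.t. the point set `S`. -/
noncomputable def lambda1 {n : ℕ} (K S : Set (Fin n → ℝ)) : ℝ :=
  sInf {l : ℝ | 0 ≤ l ∧ ∃ x ∈ S, x ≠ 0 ∧ x ∈ l • K}

/-- First restricted successive minimum: smallest `l ≥ 0` with `l • K ∩ S ≠ ∅`. -/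
noncomputable def lambdaRes {n : ℕ} (K S : Set (Fin n → ℝ)) : ℝ :=
  sInf {l : ℝ | 0 ≤ l ∧ (l • K ∩ S).Nonempty}

/-- `i`-th successive minimum of `K` w.r.t. the point set `S`. -/
noncomputable def lambdaI {n : ℕ} (i : ℕ) (K S : Set (Fin n → ℝ)) : ℝ :=
  sInf {l : ℝ | 0 ≤ l ∧ i ≤ Module.finrank ℝ (Submodule.span ℝ (l • K ∩ S))}

/-- The (half-open) fundamental parallelepiped of the basis `b`. -/
noncomputable def fundPar {n : ℕ} (b : Fin n → (Fin n → ℝ)) : Set (Fin n → ℝ) :=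
  {x | ∃ ρ : Fin n → ℝ, (∀ i, 0 ≤ ρ i ∧ ρ i < 1) ∧ x = ∑ i, ρ i • b i}

/-- The covering radius of `K` with respect to the point set `L`. -/
noncomputable def covRadius {n : ℕ} (K L : Set (Fin n → ℝ)) : ℝ :=
  sInf {μ : ℝ | 0 < μ ∧ ∀ t : Fin n → ℝ, (({t} + μ • K) ∩ L).Nonempty}

section Stmt3AuxSection

open Set

namespace Stmt3Aux

variable {n : ℕ}

lemma li_int {v : Fin n → (Fin n → ℝ)} (hv : LinearIndependent ℝ v) :
    LinearIndependent ℤ v :=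
  hv.restrict_scalars (fun x y h => by
    have : (x : ℝ) = y := by simpa using h
    exact_mod_cast this)

lemma exists_int_matrix {u v : Fin n → (Fin n → ℝ)}
    (h : ∀ j, u j ∈ Submodule.span ℤ (Set.range v)) :
    ∃ A : Matrix (Fin n) (Fin n) ℤ,
      Matrix.of u = (A.map (Int.cast : ℤ → ℝ)) * Matrix.of v := by
  have h' : ∀ j, ∃ cc : Fin n → ℤ, ∑ i, cc i • v i = u j := fun j =>
    (Submodule.mem_span_range_iff_exists_fun ℤ).mp (h j)
  choose A hA using h'
  refine ⟨Matrix.of A, ?_⟩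
  ext j k
  have := congrFun (hA j) k
  simp only [Finset.sum_apply, Pi.smul_apply] at this
  simp only [Matrix.mul_apply, Matrix.of_apply, Matrix.map_apply]
  rw [← this]
  congr 1
  ext i
  simp [zsmul_eq_mul]

lemma det_map_intCast (A : Matrix (Fin n) (Fin n) ℤ) :
    (A.map (Int.cast : ℤ → ℝ)).det = (A.det : ℝ) := by
  rw [show A.map (Int.cast : ℤ → ℝ) = (Int.castRingHom ℝ).mapMatrix A from rfl,
    ← RingHom.map_det]
  rfl

lemma det_eq_det_of_span_eq {u v : Fin n → (Fin n → ℝ)} (hu : LinearIndependent ℝ u)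
    (huv : Submodule.span ℤ (Set.range u) = Submodule.span ℤ (Set.range v)) :
    |(Matrix.of u).det| = |(Matrix.of v).det| := by
  obtain ⟨A, hA⟩ := exists_int_matrix (u := u) (v := v)
    (fun j => huv ▸ Submodule.subset_span (mem_range_self j))
  obtain ⟨B, hB⟩ := exists_int_matrix (u := v) (v := u)
    (fun j => huv ▸ Submodule.subset_span (mem_range_self j))
  have hdu : (Matrix.of u).det ≠ 0 := by
    intro h0
    have : ¬ IsUnit (Matrix.of u) := fun h => by
      simp [Matrix.isUnit_iff_isUnit_det, h0, isUnit_iff_ne_zero] at h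
    exact this (Matrix.linearIndependent_rows_iff_isUnit.mp hu)
  have h1 : (Matrix.of u).det = (A.det : ℝ) * (Matrix.of v).det := by
    rw [hA, Matrix.det_mul, det_map_intCast]
  have h2 : (Matrix.of v).det = (B.det : ℝ) * (Matrix.of u).det := by
    rw [hB, Matrix.det_mul, det_map_intCast]
  have h3 : ((A.det * B.det : ℤ) : ℝ) = 1 := by
    have : (Matrix.of u).det = ((A.det : ℝ) * (B.det : ℝ)) * (Matrix.of u).det := by
      rw [mul_assoc, ← h2, ← h1]
    rw [Int.cast_mul]
    have := mul_right_cancel₀ hdu (by linarith [this] : ((A.det:ℝ) * B.det) * (Matrix.of u).det = 1 * (Matrix.of u).det)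
    linarith [this]
  have h4 : A.det * B.det = 1 := by exact_mod_cast h3
  have h5 : |(A.det : ℝ)| = 1 := by
    have hu1 : IsUnit A.det := IsUnit.of_mul_eq_one _ h4
    rcases Int.isUnit_iff.mp hu1 with h | h <;> simp [h]
  rw [h1, abs_mul, h5, one_mul]

end Stmt3Aux

namespace Stmt3Aux2
open Stmt3Aux

variable {n : ℕ}

lemma det_ne_zero {v : Fin n → (Fin n → ℝ)} (hv : LinearIndependent ℝ v) :
    (Matrix.of v).det ≠ 0 := by
  intro h0
  have : IsUnit (Matrix.of v) := Matrix.linearIndependent_rows_iff_isUnit.mp hv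
  rw [Matrix.isUnit_iff_isUnit_det, h0, isUnit_iff_ne_zero] at this
  exact this rfl

lemma key {u v : Fin n → (Fin n → ℝ)} (hu : LinearIndependent ℝ u) (hv : LinearIndependent ℝ v)
    (h : Submodule.span ℤ (Set.range u) ≤ Submodule.span ℤ (Set.range v)) :
    |(Matrix.of u).det| =
      (Nat.card ((Submodule.span ℤ (Set.range v)) ⧸
        ((Submodule.span ℤ (Set.range u)).comap (Submodule.span ℤ (Set.range v)).subtype)) : ℝ)
        * |(Matrix.of v).det| := by
  classical
  set Lv := Submodule.span ℤ (Set.range v) with hLv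
  set Lu := Submodule.span ℤ (Set.range u) with hLu
  set N : Submodule ℤ Lv := Lu.comap Lv.subtype with hN
  let bv : Module.Basis (Fin n) ℤ Lv := Module.Basis.span (li_int hv)
  obtain ⟨m, snf⟩ := N.smithNormalForm bv
  let bu : Module.Basis (Fin n) ℤ Lu := Module.Basis.span (li_int hu)
  let buN : Module.Basis (Fin n) ℤ N := bu.map (Submodule.comapSubtypeEquivOfLe h).symm
  have hmn : m = n := by
    have e := snf.bN.indexEquiv buN
    simpa using Fintype.card_congr e
  subst hmn
  -- index computation
  have hidx : Nat.card (Lv ⧸ N) = ∏ i, (snf.a i).natAbs := by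
    have h1 : Nat.card (Lv ⧸ N) = N.toAddSubgroup.index := rfl
    rw [h1, snf.toAddSubgroup_index_eq_pow_mul_prod]
    simp [Ideal.span_singleton_toAddSubgroup_eq_zmultiples, Int.index_zmultiples]
  -- the families from the SNF bases
  set w : Fin m → (Fin m → ℝ) := fun i => ((snf.bM i : Lv) : Fin m → ℝ) with hw
  set wN : Fin m → (Fin m → ℝ) := fun i => (((snf.bN i : N) : Lv) : Fin m → ℝ) with hwN
  have hspanw : Submodule.span ℤ (Set.range w) = Lv := by
    have : Set.range w = Lv.subtype '' Set.range snf.bM := by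
      rw [← Set.range_comp]; rfl
    rw [this, ← Submodule.map_span, Module.Basis.span_eq, Submodule.map_subtype_top]
  have hspanwN : Submodule.span ℤ (Set.range wN) = Lu := by
    have : Set.range wN = Lv.subtype '' (N.subtype '' Set.range snf.bN) := by
      rw [← Set.range_comp, ← Set.range_comp]; rfl
    rw [this, ← Submodule.map_span, ← Submodule.map_span, Module.Basis.span_eq,
      Submodule.map_subtype_top, Submodule.map_comap_subtype]
    exact inf_eq_right.mpr h
  -- determinant of wN in terms of w
  have hentry : ∀ i j, (Matrix.of wN) i j = ((snf.a i : ℝ)) * (Matrix.of (w ∘ snf.f)) i j := by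
    intro i j
    have hsnf := snf.snf i
    have : ((snf.bN i : N) : Lv) = snf.a i • (snf.bM (snf.f i)) := hsnf
    have h2 : (((snf.bN i : N) : Lv) : Fin m → ℝ) = snf.a i • ((snf.bM (snf.f i) : Lv) : Fin m → ℝ) := by
      rw [this]; rfl
    show wN i j = _
    rw [hwN]
    simp only [h2, Pi.smul_apply, zsmul_eq_mul]
    rfl
  have hdet1 : (Matrix.of wN).det = (∏ i, (snf.a i : ℝ)) * (Matrix.of (w ∘ snf.f)).det := by
    have : Matrix.of wN = Matrix.of (fun i j => (snf.a i : ℝ) * (Matrix.of (w ∘ snf.f)) i j) := by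
      ext i j; exact hentry i j
    rw [this, Matrix.det_mul_column]
  have hbij : Function.Bijective snf.f := Finite.injective_iff_bijective.mp snf.f.injective
  let e : Equiv.Perm (Fin m) := Equiv.ofBijective snf.f hbij
  have hdet2 : (Matrix.of (w ∘ snf.f)).det = (Equiv.Perm.sign e : ℤ) * (Matrix.of w).det := by
    have : Matrix.of (w ∘ snf.f) = fun i => (Matrix.of w) (e i) := rfl
    rw [this]
    exact Matrix.det_permute e (Matrix.of w)
  have habs : |(Matrix.of wN).det| = (∏ i, ((snf.a i).natAbs : ℝ)) * |(Matrix.of w).det| := by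
    rw [hdet1, hdet2, abs_mul, abs_mul]
    have hsign : |((Equiv.Perm.sign e : ℤ) : ℝ)| = 1 := by
      rcases Int.units_eq_one_or (Equiv.Perm.sign e) with hs | hs <;> simp [hs]
    rw [hsign, one_mul, Finset.abs_prod]
    congr 1
    exact Finset.prod_congr rfl fun i _ => by rw [Nat.cast_natAbs, Int.cast_abs]
  have h3 : |(Matrix.of u).det| = |(Matrix.of wN).det| :=
    det_eq_det_of_span_eq hu (by rw [hspanwN])
  have h4 : |(Matrix.of v).det| = |(Matrix.of w).det| :=
    det_eq_det_of_span_eq hv (by rw [hspanw])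
  rw [h3, habs, h4, hidx]
  push_cast
  ring

end Stmt3Aux2

namespace Stmt3Aux3
open Stmt3Aux Stmt3Aux2

lemma ncard_biUnion_le {α ι : Type*} [DecidableEq ι] (t : Finset ι) (f : ι → Set α) :
    (⋃ i ∈ t, f i).ncard ≤ ∑ i ∈ t, (f i).ncard := by
  induction t using Finset.induction with
  | empty => simp
  | insert a t h ih =>
    rw [Finset.set_biUnion_insert, Finset.sum_insert h]
    exact le_trans (Set.ncard_union_le _ _) (Nat.add_le_add_left ih _)

lemma ncard_iUnion_le {α ι : Type*} [Fintype ι] (f : ι → Set α) :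
    (⋃ i, f i).ncard ≤ ∑ i, (f i).ncard := by
  classical
  have : (⋃ i, f i) = ⋃ i ∈ (Finset.univ : Finset ι), f i := by simp
  rw [this]
  exact ncard_biUnion_le _ _

end Stmt3Aux3

noncomputable def lat' {n : ℕ} (b : Fin n → (Fin n → ℝ)) : Set (Fin n → ℝ) :=
  (Submodule.span ℤ (Set.range b) : Submodule ℤ (Fin n → ℝ))

noncomputable def latDet' {n : ℕ} (b : Fin n → (Fin n → ℝ)) : ℝ :=
  |(Matrix.of b).det|

theorem stmt3' {n s : ℕ} (b cbar : Fin n → (Fin n → ℝ)) (c : Fin s → Fin n → (Fin n → ℝ))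
    (hb : LinearIndependent ℝ b) (hc : ∀ i, LinearIndependent ℝ (c i))
    (hsub : ∀ i, lat' (c i) ⊆ lat' b)
    (hcbar : LinearIndependent ℝ cbar)
    (hbar : lat' cbar = ⋂ i, lat' (c i))
    (hidx : (∑ i, latDet' cbar / latDet' (c i)) - s + 2 ≤ latDet' cbar / latDet' b) :
    (⋃ i, lat' (c i)) ≠ lat' b := by
  classical
  intro hU
  rcases Nat.eq_zero_or_pos s with hs | hs
  · subst hs
    have h0 : (0 : Fin n → ℝ) ∈ lat' b := Submodule.zero_mem _
    rw [← hU] at h0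
    simpa using h0
  set Λ := Submodule.span ℤ (Set.range b) with hΛ
  set Λb := Submodule.span ℤ (Set.range cbar) with hΛb
  set Λi := fun i => Submodule.span ℤ (Set.range (c i)) with hΛi
  have hle : ∀ i, Λi i ≤ Λ := fun i => SetLike.coe_subset_coe.mp (hsub i)
  have hbarle : ∀ i, Λb ≤ Λi i := by
    intro i
    refine SetLike.coe_subset_coe.mp ?_
    have : (Λb : Set (Fin n → ℝ)) = ⋂ i, (Λi i : Set (Fin n → ℝ)) := hbar
    rw [this]
    exact Set.iInter_subset _ i
  have hbarΛ : Λb ≤ Λ := (hbarle ⟨0, hs⟩).trans (hle ⟨0, hs⟩)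
  -- index numbers
  set N : ℕ := Nat.card (Λ ⧸ Λb.comap Λ.subtype) with hNdef
  set Ni : Fin s → ℕ := fun i => Nat.card (Λi i ⧸ Λb.comap (Λi i).subtype) with hNidef
  have keyN : latDet' cbar = (N : ℝ) * latDet' b :=
    Stmt3Aux2.key hcbar hb hbarΛ
  have keyNi : ∀ i, latDet' cbar = (Ni i : ℝ) * latDet' (c i) := fun i =>
    Stmt3Aux2.key hcbar (hc i) (hbarle i)
  have hdb : latDet' b ≠ 0 := abs_ne_zero.mpr (Stmt3Aux2.det_ne_zero hb)
  have hdc : ∀ i, latDet' (c i) ≠ 0 := fun i => abs_ne_zero.mpr (Stmt3Aux2.det_ne_zero (hc i))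
  have hdcbar : latDet' cbar ≠ 0 := abs_ne_zero.mpr (Stmt3Aux2.det_ne_zero hcbar)
  have hN0 : (N : ℝ) ≠ 0 := fun h => hdcbar (by rw [keyN, h, zero_mul])
  have hNi0 : ∀ i, (Ni i : ℝ) ≠ 0 := fun i h => hdcbar (by rw [keyNi i, h, zero_mul])
  have hratio : latDet' cbar / latDet' b = (N : ℝ) := by
    rw [keyN, mul_div_assoc, div_self hdb, mul_one]
  have hratioi : ∀ i, latDet' cbar / latDet' (c i) = (Ni i : ℝ) := by
    intro i; rw [keyNi i, mul_div_assoc, div_self (hdc i), mul_one]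
  -- finiteness of the quotient
  have hNnat : N ≠ 0 := fun h => hN0 (by exact_mod_cast congrArg (Nat.cast (R := ℝ)) h)
  have hQfin : Finite (Λ ⧸ Λb.comap Λ.subtype) := (Nat.card_ne_zero.mp hNnat).2
  -- the quotient maps
  set K := Λb.comap Λ.subtype with hK
  set φ : ∀ i : Fin s, (Λi i →ₗ[ℤ] (Λ ⧸ K)) :=
    fun i => K.mkQ.comp (Submodule.inclusion (hle i)) with hφ
  have hker : ∀ i, LinearMap.ker (φ i) = Λb.comap (Λi i).subtype := by
    intro i
    ext x
    simp only [hφ, LinearMap.mem_ker, LinearMap.comp_apply, Submodule.mkQ_apply,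
      Submodule.Quotient.mk_eq_zero, hK, Submodule.mem_comap]
    rfl
  have hcardS : ∀ i, Nat.card (LinearMap.range (φ i)) = Ni i := by
    intro i
    have e := (LinearMap.quotKerEquivRange (φ i)).toEquiv
    have : Nat.card (Λi i ⧸ LinearMap.ker (φ i)) = Nat.card (LinearMap.range (φ i)) :=
      Nat.card_congr e
    rw [← this, hker i]
  -- covering
  set S : Fin s → Set (Λ ⧸ K) := fun i => (LinearMap.range (φ i) : Set (Λ ⧸ K)) with hS
  have hcover : (Set.univ : Set (Λ ⧸ K)) ⊆ ⋃ i, S i := by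
    intro q _
    obtain ⟨x, rfl⟩ := Submodule.mkQ_surjective K q
    have hx : (x : Fin n → ℝ) ∈ ⋃ i, lat' (c i) := by rw [hU]; exact x.2
    obtain ⟨t, ⟨i, rfl⟩, hxi⟩ := hx
    refine Set.mem_iUnion.mpr ⟨i, ⟨⟨(x : Fin n → ℝ), hxi⟩, ?_⟩⟩
    show Submodule.Quotient.mk (Submodule.inclusion (hle i) ⟨(x : Fin n → ℝ), hxi⟩) = Submodule.Quotient.mk x
    congr 1
  have h0S : ∀ i, (0 : Λ ⧸ K) ∈ S i := fun i => (LinearMap.range (φ i)).zero_mem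
  -- counting
  have hsplit : (Set.univ : Set (Λ ⧸ K)) ⊆ {(0 : Λ ⧸ K)} ∪ ⋃ i, (S i \ {0}) := by
    intro q hq
    by_cases h0 : q = 0
    · exact Or.inl (by simp [h0])
    · obtain ⟨t, ⟨i, rfl⟩, hqi⟩ := hcover hq
      exact Or.inr (Set.mem_iUnion.mpr ⟨i, ⟨hqi, by simpa using h0⟩⟩)
  have hcount : N + s ≤ 1 + ∑ i, Ni i := by
    have h1 : N = (Set.univ : Set (Λ ⧸ K)).ncard := by rw [Set.ncard_univ]
    have h2 : (Set.univ : Set (Λ ⧸ K)).ncard ≤ 1 + ∑ i, (S i \ {0}).ncard := by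
      calc (Set.univ : Set (Λ ⧸ K)).ncard
          ≤ ({(0 : Λ ⧸ K)} ∪ ⋃ i, (S i \ {0})).ncard :=
            Set.ncard_le_ncard hsplit (Set.toFinite _)
        _ ≤ ({(0 : Λ ⧸ K)} : Set (Λ ⧸ K)).ncard + (⋃ i, (S i \ {0})).ncard :=
            Set.ncard_union_le _ _
        _ ≤ 1 + ∑ i, (S i \ {0}).ncard := by
            rw [Set.ncard_singleton]
            exact Nat.add_le_add_left (Stmt3Aux3.ncard_iUnion_le _) 1
    have h3 : ∀ i, (S i \ {0}).ncard + 1 = Ni i := by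
      intro i
      rw [Set.ncard_diff_singleton_add_one (h0S i) (Set.toFinite _)]
      rw [← hcardS i, ← Nat.card_coe_set_eq]
      rfl
    have h4 : ∑ i, ((S i \ {0}).ncard + 1) = ∑ i, Ni i := Finset.sum_congr rfl fun i _ => h3 i
    rw [Finset.sum_add_distrib] at h4
    simp only [Finset.sum_const, Finset.card_univ, Fintype.card_fin, smul_eq_mul, mul_one] at h4
    omega
  -- final contradiction
  rw [hratio] at hidx
  have hsum : (∑ i, latDet' cbar / latDet' (c i)) = ∑ i, (Ni i : ℝ) :=
    Finset.sum_congr rfl fun i _ => hratioi i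
  rw [hsum] at hidx
  have hcast : (N : ℝ) + s ≤ 1 + ∑ i, (Ni i : ℝ) := by
    have := hcount
    push_cast
    exact_mod_cast this
  linarith


end Stmt3AuxSection

/-- if `det Λ̄ / det Λ ≥ Σ det Λ̄ / det Λᵢ − s + 2` then the union of
the sublattices is not all of `Λ`. -/
theorem stmt3 {n s : ℕ} (b cbar : Fin n → (Fin n → ℝ)) (c : Fin s → Fin n → (Fin n → ℝ))
    (hb : LinearIndependent ℝ b) (hc : ∀ i, LinearIndependent ℝ (c i))
    (hsub : ∀ i, lat (c i) ⊆ lat b)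
    (hcbar : LinearIndependent ℝ cbar)
    (hbar : lat cbar = ⋂ i, lat (c i))
    (hidx : (∑ i, latDet cbar / latDet (c i)) - s + 2 ≤ latDet cbar / latDet b) :
    (⋃ i, lat (c i)) ≠ lat b := by
  exact stmt3' b cbar c hb hc hsub hcbar hbar hidx
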